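/- Let ξ^{μ₁}_t, ξ^{μ₂}_t be two solutions of the mutation Lotka-Volterra system with mutation rates μ₁, μ₂ ∈ [0, μ₀) whose trajectories remain in the bounded set Ω. Then there exist finite constants A, B > 0 (depending only on b, r, α, n) such that for all t ≥ s ≥ 0: ‖ξ^{μ₁}_t − ξ^{μ₂}_t‖ ≤ e^{(t−s)A}·(‖ξ^{μ₁}_s − ξ^{μ₂}_s‖ + √((μ₁+μ₂)·B/A)). -/

import Mathlib

set_option maxHeartbeats 1000000

open Finset Real

/-- Continuity of solutions of the mutation Lotka-Volterra system in the
initial condition and in the mutation rate: a Gronwall estimate with constants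
depending only on the parameters b, r, α, n. -/
theorem stmt_8 {n : ℕ} (b r : (Fin n → Bool) → ℝ)
    (α : (Fin n → Bool) → (Fin n → Bool) → ℝ)
    (m : (Fin n → Bool) → (Fin n → Bool) → ℝ) (μ₀ : ℝ)
    (hb : ∀ x, 0 < b x) (hα : ∀ x y, 0 < α x y)
    (hm0 : ∀ x y, 0 ≤ m x y)
    (hmsupp : ∀ y x, m y x ≠ 0 → hammingDist y x = 1) :
    ∃ A B : ℝ, 0 < A ∧ 0 < B ∧
      ∀ (μ₁ μ₂ : ℝ) (ξ₁ ξ₂ : ℝ → (Fin n → Bool) → ℝ),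
        0 ≤ μ₁ → μ₁ < μ₀ → 0 ≤ μ₂ → μ₂ < μ₀ →
        (∀ t, 0 ≤ t → ∀ x, 0 ≤ ξ₁ t x ∧ ξ₁ t x ≤ 2 * |r x| / α x x) →
        (∀ t, 0 ≤ t → ∀ x, 0 ≤ ξ₂ t x ∧ ξ₂ t x ≤ 2 * |r x| / α x x) →
        (∀ t, 0 ≤ t → ∀ x, HasDerivAt (fun s => ξ₁ s x)
          ((r x - ∑ y, α x y * ξ₁ t y) * ξ₁ t x
            + μ₁ * ∑ y, b y * m y x * ξ₁ t y - μ₁ * b x * ξ₁ t x) t) →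
        (∀ t, 0 ≤ t → ∀ x, HasDerivAt (fun s => ξ₂ s x)
          ((r x - ∑ y, α x y * ξ₂ t y) * ξ₂ t x
            + μ₂ * ∑ y, b y * m y x * ξ₂ t y - μ₂ * b x * ξ₂ t x) t) →
        ∀ s t : ℝ, 0 ≤ s → s ≤ t →
          Real.sqrt (∑ x, (ξ₁ t x - ξ₂ t x) ^ 2)
            ≤ Real.exp ((t - s) * A) *
              (Real.sqrt (∑ x, (ξ₁ s x - ξ₂ s x) ^ 2)
                + Real.sqrt ((μ₁ + μ₂) * B / A)) := by
  classical
  set M : (Fin n → Bool) → ℝ := fun x => 2 * |r x| / α x x with hM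
  have hM0 : ∀ x, 0 ≤ M x := fun x => div_nonneg (by positivity) (hα x x).le
  set μ' : ℝ := max μ₀ 0 with hμ'
  have hμ'0 : 0 ≤ μ' := le_max_right _ _
  set Kf : (Fin n → Bool) → ℝ := fun x =>
    |r x| + (∑ y, α x y) * M x + (∑ y, α x y * M y)
      + μ' * (∑ y, b y * m y x) + μ' * b x with hKf
  set Cf : (Fin n → Bool) → ℝ := fun x =>
    (∑ y, b y * m y x * M y) + b x * M x with hCf
  have hα1 : ∀ x, 0 ≤ ∑ y, α x y := fun x => sum_nonneg fun y _ => (hα x y).le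
  have hα2 : ∀ x, 0 ≤ ∑ y, α x y * M y :=
    fun x => sum_nonneg fun y _ => mul_nonneg (hα x y).le (hM0 y)
  have hbm : ∀ x, 0 ≤ ∑ y, b y * m y x :=
    fun x => sum_nonneg fun y _ => mul_nonneg (hb y).le (hm0 y x)
  have hbmM : ∀ x, 0 ≤ ∑ y, b y * m y x * M y :=
    fun x => sum_nonneg fun y _ => mul_nonneg (mul_nonneg (hb y).le (hm0 y x)) (hM0 y)
  have hKf0 : ∀ x, 0 ≤ Kf x := by
    intro x
    have h1 := abs_nonneg (r x)
    have h2 := mul_nonneg (hα1 x) (hM0 x)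
    have h3 := hα2 x
    have h4 := mul_nonneg hμ'0 (hbm x)
    have h5 := mul_nonneg hμ'0 (hb x).le
    rw [hKf]; dsimp only; linarith
  have hCf0 : ∀ x, 0 ≤ Cf x := by
    intro x
    have h1 := hbmM x
    have h2 := mul_nonneg (hb x).le (hM0 x)
    rw [hCf]; dsimp only; linarith
  set A : ℝ := (∑ x, Kf x) + 1 with hA
  set C : ℝ := (∑ x, Cf x) + 1 with hC
  have hKsum : 0 ≤ ∑ x, Kf x := sum_nonneg fun x _ => hKf0 x
  have hCsum : 0 ≤ ∑ x, Cf x := sum_nonneg fun x _ => hCf0 x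
  have hApos : 0 < A := by rw [hA]; linarith
  have hCpos : 0 < C := by rw [hC]; linarith
  refine ⟨A, (2 * μ' * C ^ 2 + 1) / A, hApos, by positivity, ?_⟩
  intro μ₁ μ₂ ξ₁ ξ₂ hμ10 hμ1 hμ20 hμ2 hΩ1 hΩ2 hD1 hD2 s t hs hst
  have hμ1' : μ₁ ≤ μ' := hμ1.le.trans (le_max_left _ _)
  have hμ2' : μ₂ ≤ μ' := hμ2.le.trans (le_max_left _ _)
  have hμs : 0 ≤ μ₁ + μ₂ := by linarith
  set f : ℝ → EuclideanSpace ℝ (Fin n → Bool) := fun u => WithLp.toLp 2 (fun x => ξ₁ u x - ξ₂ u x) with hf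
  set f' : ℝ → EuclideanSpace ℝ (Fin n → Bool) := fun u => WithLp.toLp 2 (fun x =>
    ((r x - ∑ y, α x y * ξ₁ u y) * ξ₁ u x
      + μ₁ * ∑ y, b y * m y x * ξ₁ u y - μ₁ * b x * ξ₁ u x)
    - ((r x - ∑ y, α x y * ξ₂ u y) * ξ₂ u x
      + μ₂ * ∑ y, b y * m y x * ξ₂ u y - μ₂ * b x * ξ₂ u x)) with hf'
  have hnorm : ∀ u, ‖f u‖ = Real.sqrt (∑ x, (ξ₁ u x - ξ₂ u x) ^ 2) := by
    intro u
    rw [EuclideanSpace.norm_eq]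
    simp only [hf, Real.norm_eq_abs, sq_abs]
  have hcomp : ∀ u x, |ξ₁ u x - ξ₂ u x| ≤ ‖f u‖ := by
    intro u x
    rw [hnorm u, ← Real.sqrt_sq_eq_abs]
    exact Real.sqrt_le_sqrt (Finset.single_le_sum
      (fun y _ => sq_nonneg (ξ₁ u y - ξ₂ u y)) (mem_univ x))
  have hderiv : ∀ u, 0 ≤ u → HasDerivAt f (f' u) u := by
    intro u hu
    have hp : HasDerivAt (fun v => (fun x => ξ₁ v x - ξ₂ v x : (Fin n → Bool) → ℝ))
        (fun x =>
          ((r x - ∑ y, α x y * ξ₁ u y) * ξ₁ u x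
            + μ₁ * ∑ y, b y * m y x * ξ₁ u y - μ₁ * b x * ξ₁ u x)
          - ((r x - ∑ y, α x y * ξ₂ u y) * ξ₂ u x
            + μ₂ * ∑ y, b y * m y x * ξ₂ u y - μ₂ * b x * ξ₂ u x)) u :=
      hasDerivAt_pi.mpr fun x => (hD1 u hu x).sub (hD2 u hu x)
    exact (((PiLp.continuousLinearEquiv 2 ℝ fun _ : Fin n → Bool => ℝ).symm :
        ((Fin n → Bool) → ℝ) →L[ℝ] EuclideanSpace ℝ (Fin n → Bool))).hasFDerivAt.comp_hasDerivAt u hp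
  have hbound : ∀ u, 0 ≤ u → ‖f' u‖ ≤ A * ‖f u‖ + (μ₁ + μ₂) * C := by
    intro u hu
    have hL0 : 0 ≤ ‖f u‖ := norm_nonneg _
    have hdL : ∀ y, |ξ₁ u y - ξ₂ u y| ≤ ‖f u‖ := hcomp u
    have hpt : ∀ x, |f' u x| ≤ Kf x * ‖f u‖ + (μ₁ + μ₂) * Cf x := by
      intro x
      obtain ⟨h10, h1M⟩ := hΩ1 u hu x
      obtain ⟨h20, h2M⟩ := hΩ2 u hu x
      have hid : f' u x =
          r x * (ξ₁ u x - ξ₂ u x)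
          - (∑ y, α x y * (ξ₁ u y - ξ₂ u y)) * ξ₁ u x
          - (∑ y, α x y * ξ₂ u y) * (ξ₁ u x - ξ₂ u x)
          + μ₁ * (∑ y, b y * m y x * (ξ₁ u y - ξ₂ u y))
          + (μ₁ - μ₂) * (∑ y, b y * m y x * ξ₂ u y)
          - μ₁ * (b x * (ξ₁ u x - ξ₂ u x))
          - (μ₁ - μ₂) * (b x * ξ₂ u x) := by
        show (((r x - ∑ y, α x y * ξ₁ u y) * ξ₁ u x
            + μ₁ * ∑ y, b y * m y x * ξ₁ u y - μ₁ * b x * ξ₁ u x)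
          - ((r x - ∑ y, α x y * ξ₂ u y) * ξ₂ u x
            + μ₂ * ∑ y, b y * m y x * ξ₂ u y - μ₂ * b x * ξ₂ u x)) = _
        simp only [mul_sub, Finset.sum_sub_distrib]
        ring
      have hS1 : |∑ y, α x y * (ξ₁ u y - ξ₂ u y)| ≤ (∑ y, α x y) * ‖f u‖ := by
        calc |∑ y, α x y * (ξ₁ u y - ξ₂ u y)| ≤ ∑ y, |α x y * (ξ₁ u y - ξ₂ u y)| :=
              Finset.abs_sum_le_sum_abs _ _
          _ ≤ ∑ y, α x y * ‖f u‖ := Finset.sum_le_sum fun y _ => by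
              rw [abs_mul, abs_of_nonneg (hα x y).le]
              exact mul_le_mul_of_nonneg_left (hdL y) (hα x y).le
          _ = (∑ y, α x y) * ‖f u‖ := (Finset.sum_mul _ _ _).symm
      have hS2 : |∑ y, α x y * ξ₂ u y| ≤ ∑ y, α x y * M y := by
        calc |∑ y, α x y * ξ₂ u y| ≤ ∑ y, |α x y * ξ₂ u y| := Finset.abs_sum_le_sum_abs _ _
          _ ≤ ∑ y, α x y * M y := Finset.sum_le_sum fun y _ => by
              rw [abs_mul, abs_of_nonneg (hα x y).le, abs_of_nonneg (hΩ2 u hu y).1]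
              exact mul_le_mul_of_nonneg_left (hΩ2 u hu y).2 (hα x y).le
      have hS3 : |∑ y, b y * m y x * (ξ₁ u y - ξ₂ u y)| ≤ (∑ y, b y * m y x) * ‖f u‖ := by
        calc |∑ y, b y * m y x * (ξ₁ u y - ξ₂ u y)| ≤ ∑ y, |b y * m y x * (ξ₁ u y - ξ₂ u y)| :=
              Finset.abs_sum_le_sum_abs _ _
          _ ≤ ∑ y, b y * m y x * ‖f u‖ := Finset.sum_le_sum fun y _ => by
              rw [abs_mul, abs_of_nonneg (mul_nonneg (hb y).le (hm0 y x))]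
              exact mul_le_mul_of_nonneg_left (hdL y) (mul_nonneg (hb y).le (hm0 y x))
          _ = (∑ y, b y * m y x) * ‖f u‖ := (Finset.sum_mul _ _ _).symm
      have hS4 : |∑ y, b y * m y x * ξ₂ u y| ≤ ∑ y, b y * m y x * M y := by
        calc |∑ y, b y * m y x * ξ₂ u y| ≤ ∑ y, |b y * m y x * ξ₂ u y| :=
              Finset.abs_sum_le_sum_abs _ _
          _ ≤ ∑ y, b y * m y x * M y := Finset.sum_le_sum fun y _ => by
              rw [abs_mul, abs_of_nonneg (mul_nonneg (hb y).le (hm0 y x)),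
                abs_of_nonneg (hΩ2 u hu y).1]
              exact mul_le_mul_of_nonneg_left (hΩ2 u hu y).2 (mul_nonneg (hb y).le (hm0 y x))
      have hμd : |μ₁ - μ₂| ≤ μ₁ + μ₂ := abs_le.mpr ⟨by linarith, by linarith⟩
      have hμ1a : |μ₁| = μ₁ := abs_of_nonneg hμ10
      have h1 : |r x * (ξ₁ u x - ξ₂ u x)| ≤ |r x| * ‖f u‖ := by
        rw [abs_mul]
        exact mul_le_mul_of_nonneg_left (hdL x) (abs_nonneg _)
      have h2 : |(∑ y, α x y * (ξ₁ u y - ξ₂ u y)) * ξ₁ u x| ≤ ((∑ y, α x y) * ‖f u‖) * M x := by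
        rw [abs_mul]
        exact mul_le_mul hS1 (by rw [abs_of_nonneg h10]; exact h1M) (abs_nonneg _)
          (mul_nonneg (hα1 x) hL0)
      have h3 : |(∑ y, α x y * ξ₂ u y) * (ξ₁ u x - ξ₂ u x)| ≤ (∑ y, α x y * M y) * ‖f u‖ := by
        rw [abs_mul]
        exact mul_le_mul hS2 (hdL x) (abs_nonneg _) (hα2 x)
      have h4 : |μ₁ * (∑ y, b y * m y x * (ξ₁ u y - ξ₂ u y))|
          ≤ μ' * ((∑ y, b y * m y x) * ‖f u‖) := by
        rw [abs_mul, hμ1a]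
        exact mul_le_mul hμ1' hS3 (abs_nonneg _) hμ'0
      have h5 : |(μ₁ - μ₂) * (∑ y, b y * m y x * ξ₂ u y)|
          ≤ (μ₁ + μ₂) * (∑ y, b y * m y x * M y) := by
        rw [abs_mul]
        exact mul_le_mul hμd hS4 (abs_nonneg _) hμs
      have h6 : |μ₁ * (b x * (ξ₁ u x - ξ₂ u x))| ≤ μ' * (b x * ‖f u‖) := by
        rw [abs_mul, hμ1a, abs_mul, abs_of_nonneg (hb x).le]
        exact mul_le_mul hμ1' (mul_le_mul_of_nonneg_left (hdL x) (hb x).le)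
          (mul_nonneg (hb x).le (abs_nonneg _)) hμ'0
      have h7 : |(μ₁ - μ₂) * (b x * ξ₂ u x)| ≤ (μ₁ + μ₂) * (b x * M x) := by
        rw [abs_mul, abs_mul, abs_of_nonneg (hb x).le, abs_of_nonneg h20]
        exact mul_le_mul hμd (mul_le_mul_of_nonneg_left h2M (hb x).le)
          (mul_nonneg (hb x).le h20) hμs
      rw [hid, hKf, hCf]
      dsimp only
      obtain ⟨h1a, h1b⟩ := abs_le.mp h1
      obtain ⟨h2a, h2b⟩ := abs_le.mp h2
      obtain ⟨h3a, h3b⟩ := abs_le.mp h3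
      obtain ⟨h4a, h4b⟩ := abs_le.mp h4
      obtain ⟨h5a, h5b⟩ := abs_le.mp h5
      obtain ⟨h6a, h6b⟩ := abs_le.mp h6
      obtain ⟨h7a, h7b⟩ := abs_le.mp h7
      rw [abs_le]
      constructor <;> linarith
    have hnormsum : ‖f' u‖ ≤ ∑ x, |f' u x| := by
      rw [EuclideanSpace.norm_eq]
      have habs : ∀ x : Fin n → Bool, |f' u x| ≤ ∑ y, |f' u y| :=
        fun x => Finset.single_le_sum (f := fun y => |f' u y|)
          (fun y _ => abs_nonneg _) (mem_univ x)
      have hsq : ∑ x, ‖f' u x‖ ^ 2 ≤ (∑ x, |f' u x|) ^ 2 := by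
        calc ∑ x, ‖f' u x‖ ^ 2 = ∑ x, |f' u x| * |f' u x| := by
              simp [Real.norm_eq_abs, sq]
          _ ≤ ∑ x, |f' u x| * (∑ y, |f' u y|) := Finset.sum_le_sum fun x _ =>
              mul_le_mul_of_nonneg_left (habs x) (abs_nonneg _)
          _ = (∑ x, |f' u x|) ^ 2 := by rw [← Finset.sum_mul, sq]
      calc Real.sqrt (∑ x, ‖f' u x‖ ^ 2) ≤ Real.sqrt ((∑ x, |f' u x|) ^ 2) :=
            Real.sqrt_le_sqrt hsq
        _ = ∑ x, |f' u x| := Real.sqrt_sq (sum_nonneg fun x _ => abs_nonneg _)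
    calc ‖f' u‖ ≤ ∑ x, |f' u x| := hnormsum
      _ ≤ ∑ x, (Kf x * ‖f u‖ + (μ₁ + μ₂) * Cf x) := Finset.sum_le_sum fun x _ => hpt x
      _ = (∑ x, Kf x) * ‖f u‖ + (μ₁ + μ₂) * (∑ x, Cf x) := by
          rw [Finset.sum_add_distrib, ← Finset.sum_mul, ← Finset.mul_sum]
      _ ≤ A * ‖f u‖ + (μ₁ + μ₂) * C := by
          have hKA : (∑ x, Kf x) ≤ A := by rw [hA]; linarith
          have hCC : (∑ x, Cf x) ≤ C := by rw [hC]; linarith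
          exact add_le_add (mul_le_mul_of_nonneg_right hKA hL0)
            (mul_le_mul_of_nonneg_left hCC hμs)
  have hg : ‖f t‖ ≤ gronwallBound ‖f s‖ A ((μ₁ + μ₂) * C) (t - s) :=
    norm_le_gronwallBound_of_norm_deriv_right_le
      (fun u hu => ((hderiv u (hs.trans hu.1)).continuousAt).continuousWithinAt)
      (fun u hu => (hderiv u (hs.trans hu.1)).hasDerivWithinAt)
      le_rfl
      (fun u hu => hbound u (hs.trans hu.1))
      t ⟨hst, le_rfl⟩
  rw [gronwallBound_of_K_ne_0 hApos.ne'] at hg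
  rw [← hnorm t, ← hnorm s]
  have hts : 0 ≤ t - s := by linarith
  have hexp1 : 1 ≤ Real.exp (A * (t - s)) :=
    Real.one_le_exp (mul_nonneg hApos.le hts)
  have hkey : (μ₁ + μ₂) * C / A ≤ Real.sqrt ((μ₁ + μ₂) * ((2 * μ' * C ^ 2 + 1) / A) / A) := by
    rw [Real.le_sqrt (by positivity) (by positivity)]
    have heq : (μ₁ + μ₂) * ((2 * μ' * C ^ 2 + 1) / A) / A
        = ((μ₁ + μ₂) * (2 * μ' * C ^ 2 + 1)) / A ^ 2 := by
      rw [← mul_div_assoc, div_div, ← sq]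
    have heq2 : ((μ₁ + μ₂) * C / A) ^ 2 = ((μ₁ + μ₂) * C) ^ 2 / A ^ 2 := div_pow _ _ _
    rw [heq, heq2]
    gcongr
    have h2μ : (μ₁ + μ₂) * ((μ₁ + μ₂) * C ^ 2) ≤ 2 * μ' * ((μ₁ + μ₂) * C ^ 2) :=
      mul_le_mul_of_nonneg_right (by linarith) (mul_nonneg hμs (sq_nonneg C))
    nlinarith [hμs, h2μ]
  calc ‖f t‖ ≤ ‖f s‖ * Real.exp (A * (t - s))
        + (μ₁ + μ₂) * C / A * (Real.exp (A * (t - s)) - 1) := hg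
    _ ≤ ‖f s‖ * Real.exp (A * (t - s))
        + Real.sqrt ((μ₁ + μ₂) * ((2 * μ' * C ^ 2 + 1) / A) / A) * Real.exp (A * (t - s)) := by
        refine add_le_add le_rfl ?_
        exact mul_le_mul hkey (by linarith) (by linarith) (Real.sqrt_nonneg _)
    _ = Real.exp ((t - s) * A) * (‖f s‖
        + Real.sqrt ((μ₁ + μ₂) * ((2 * μ' * C ^ 2 + 1) / A) / A)) := by
        rw [mul_comm A (t - s)]
        ring
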